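/- Let u_1,…,u_n ∈ ℝ^d with n ≥ 2, and let b, c, R > 0. If for all t ∈ ℝ^d with ‖t‖ > R one has (1/(π² n(n−1))) Σ_{i≠j} ξ(u_i,u_j;t) ‖t‖^b ≥ c, then the empirical measure n^{−1}Σ_{i=1}^n δ_{u_i} satisfies the weak Cramér condition with parameter (b,c,R), i.e., for all t ∈ ℝ^d with ‖t‖ > R, |(1/n)Σ_{i=1}^n e^{i t'u_i}| ≤ 1 − c/‖t‖^b. -/

import Mathlib

open MeasureTheory ProbabilityTheory Real
open scoped BigOperators ENNReal NNReal

noncomputable section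

/-- Euclidean space ℝ^d. -/
abbrev Ed (d : ℕ) := EuclideanSpace ℝ (Fin d)

variable {d : ℕ}

/-- The characteristic function of a (Borel) measure on ℝ^d. -/
def charFn (μ : Measure (Ed d)) (t : Ed d) : ℂ :=
  ∫ x, Complex.exp (((inner ℝ t x : ℝ) : ℂ) * Complex.I) ∂μ

/-- Partial derivative in the k-th coordinate direction. -/
def partialD {F : Type*} [NormedAddCommGroup F] [NormedSpace ℝ F]
    (k : Fin d) (f : Ed d → F) : Ed d → F :=
  fun x => fderiv ℝ f x (EuclideanSpace.single k 1)

/-- Iterated partial derivative `D^ν` for a multi-index ν. -/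
def mDeriv {F : Type*} [NormedAddCommGroup F] [NormedSpace ℝ F]
    (ν : Fin d → ℕ) (f : Ed d → F) : Ed d → F :=
  (List.finRange d).foldr (fun k g => (partialD k)^[ν k] g) f

/-- The ν-th cumulant of a measure μ on ℝ^d:
`κ_ν = (−i)^{|ν|} D^ν (log φ_μ)(0)` where φ_μ is the characteristic function. -/
def cumulant (μ : Measure (Ed d)) (ν : Fin d → ℕ) : ℂ :=
  (-Complex.I) ^ (∑ k, ν k) * mDeriv ν (fun t => Complex.log (charFn μ t)) 0

/-- The finite set of multi-indices ν ∈ ℤ₊^d with |ν| = j. -/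
def multiIdx (d j : ℕ) : Finset (Fin d → ℕ) :=
  (Fintype.piFinset fun _ : Fin d => Finset.range (j + 1)).filter fun ν => ∑ k, ν k = j

/-- The differential operator `χ̄_j(−D)` applied to f, where
`χ̄_j(z) = j! Σ_{|ν|=j} (χ_ν/ν!) z^ν`. -/
def chiOpApply (χ : (Fin d → ℕ) → ℂ) (j : ℕ) (f : Ed d → ℂ) : Ed d → ℂ :=
  fun x => (j.factorial : ℂ) * (-1 : ℂ) ^ j *
    ∑ ν ∈ multiIdx d j, (χ ν / ∏ k, ((ν k).factorial : ℂ)) * mDeriv ν f x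

/-- The Edgeworth polynomial operator `P̃_j(−D; {χ_ν})` applied to f:
`P̃_j = Σ_{m=1}^{j} (1/m!) Σ*_{j_1+⋯+j_m=j} ∏_k χ̄_{j_k+2}(−D)/(j_k+2)!`,
encoded as a sum over compositions of j. -/
def edgeworthOp (χ : (Fin d → ℕ) → ℂ) (j : ℕ) (f : Ed d → ℂ) : Ed d → ℂ :=
  fun x => ∑ c : Composition j, ((c.length.factorial : ℂ))⁻¹ *
    (c.blocks.foldr
      (fun jk g => fun y => (((jk + 2).factorial : ℂ))⁻¹ * chiOpApply χ (jk + 2) g y) f) x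

/-- The standard normal density on ℝ^d. -/
def gaussDensity (d : ℕ) (x : Ed d) : ℝ :=
  (2 * π) ^ (-(d : ℝ) / 2) * Real.exp (-‖x‖ ^ 2 / 2)

/-- The density of the order-s Edgeworth signed measure
`Σ_{j=0}^{s−2} n^{−j/2} P̃_j(−D;{χ_ν}) φ(x)`. -/
def edgeworthDensity (χ : (Fin d → ℕ) → ℂ) (n s : ℕ) (x : Ed d) : ℝ :=
  (∑ j ∈ Finset.range (s - 1), (((n : ℝ) ^ (-(j : ℝ) / 2) : ℝ) : ℂ) *
    edgeworthOp χ j (fun y => ((gaussDensity d y : ℝ) : ℂ)) x).re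

/-- The order-s Edgeworth signed measure, as a set function `A ↦ ∫_A (density)`. -/
def edgeworthSM (χ : (Fin d → ℕ) → ℂ) (n s : ℕ) (A : Set (Ed d)) : ℝ :=
  ∫ x in A, edgeworthDensity χ n s x

/-- The standard normal distribution Φ = N(0, I_d) on ℝ^d. -/
def stdGaussian (d : ℕ) : Measure (Ed d) :=
  volume.withDensity fun x => ENNReal.ofReal (gaussDensity d x)

/-- Modulus of continuity `ω_f(x;ε) = sup {|f z − f y| : z,y ∈ B(x;ε)}`. -/
def oscil (f : Ed d → ℝ) (x : Ed d) (ε : ℝ) : ℝ :=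
  sSup {r | ∃ z ∈ Metric.ball x ε, ∃ y ∈ Metric.ball x ε, r = |f z - f y|}

/-- Averaged modulus of continuity `ω̄_f(ε;μ) = ∫ ω_f(x;ε) dμ(x)`. -/
def oscilBar (f : Ed d → ℝ) (ε : ℝ) (μ : Measure (Ed d)) : ℝ :=
  ∫ x, oscil f x ε ∂μ

/-- `M_s(f) = sup_x |f(x)|/(1+‖x‖^s)`. -/
def Msup (s : ℕ) (f : Ed d → ℝ) : ℝ := ⨆ x : Ed d, |f x| / (1 + ‖x‖ ^ s)

/-- The (uncentered) second-moment matrix `E[X X']` of a measure on ℝ^d. -/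
def covMat (μ : Measure (Ed d)) : Matrix (Fin d) (Fin d) ℝ :=
  Matrix.of fun k l => ∫ x, x k * x l ∂μ

open Classical in
/-- Inverse square root of a matrix (junk value if not positive semidefinite). -/
def matInvSqrt (M : Matrix (Fin d) (Fin d) ℝ) : Matrix (Fin d) (Fin d) ℝ :=
  if h : M.PosSemidef then ((h.1.eigenvectorUnitary : Matrix (Fin d) (Fin d) ℝ) * Matrix.diagonal ((↑) ∘ NNReal.sqrt ∘ Real.toNNReal ∘ h.1.eigenvalues) * (star h.1.eigenvectorUnitary : Matrix (Fin d) (Fin d) ℝ))⁻¹ else 1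

open Classical in
/-- Square root of a matrix (junk value if not positive semidefinite). -/
def matSqrt (M : Matrix (Fin d) (Fin d) ℝ) : Matrix (Fin d) (Fin d) ℝ :=
  if h : M.PosSemidef then ((h.1.eigenvectorUnitary : Matrix (Fin d) (Fin d) ℝ) * Matrix.diagonal ((↑) ∘ NNReal.sqrt ∘ Real.toNNReal ∘ h.1.eigenvalues) * (star h.1.eigenvectorUnitary : Matrix (Fin d) (Fin d) ℝ)) else 1

/-- Matrix-vector multiplication on Euclidean space. -/
def mulVecE (M : Matrix (Fin d) (Fin d) ℝ) (x : Ed d) : Ed d :=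
  (EuclideanSpace.equiv (Fin d) ℝ).symm (M.mulVec (EuclideanSpace.equiv (Fin d) ℝ x))

/-- Marginal distribution of the i-th coordinate. -/
def marginal {n : ℕ} (P : Measure (Fin n → Ed d)) (i : Fin n) : Measure (Ed d) :=
  P.map fun ω => ω i

/-- `V_{n,P} = (1/n) Σ_i Var_P(X_{i,n})` (for mean-zero coordinates). -/
def Vmat {d : ℕ} (n : ℕ) (P : Measure (Fin n → Ed d)) : Matrix (Fin d) (Fin d) ℝ :=
  (n : ℝ)⁻¹ • ∑ i : Fin n, covMat (marginal P i)

/-- `Q_{n,P}`, the distribution of `n^{−1/2} Σ_i V_{n,P}^{−1/2} X_{i,n}`. -/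
def Qmeas {d : ℕ} (n : ℕ) (P : Measure (Fin n → Ed d)) : Measure (Ed d) :=
  P.map fun ω => (Real.sqrt n)⁻¹ • ∑ i, mulVecE (matInvSqrt (Vmat n P)) (ω i)

/-- `χ̄_{ν,P}`, the average over i of the ν-th cumulant of `V_{n,P}^{−1/2} X_{i,n}`. -/
def chiBar {d : ℕ} (n : ℕ) (P : Measure (Fin n → Ed d)) (ν : Fin d → ℕ) : ℂ :=
  (n : ℂ)⁻¹ * ∑ i : Fin n, cumulant ((marginal P i).map (mulVecE (matInvSqrt (Vmat n P)))) ν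

/-- `ρ_{n,s,P} = (1/n) Σ_i E_P ‖X_{i,n}‖^s`. -/
def rhoM {d : ℕ} (n s : ℕ) (P : Measure (Fin n → Ed d)) : ℝ :=
  (n : ℝ)⁻¹ * ∑ i : Fin n, ∫ ω, ‖ω i‖ ^ s ∂P

/-- The mean weak Cramér condition with parameter (b,c,R) for a collection of
joint distributions of (X_{i,n})_{i=1}^n. -/
def meanWeakCramer {d : ℕ} {n : ℕ} (Ps : Set (Measure (Fin n → Ed d))) (b c R : ℝ) : Prop :=
  ∀ P ∈ Ps, ∀ t : Ed d, R < ‖t‖ →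
    (n : ℝ)⁻¹ * ∑ i : Fin n, ‖charFn (marginal P i) t‖ ≤ 1 - c / ‖t‖ ^ b

/-- The weak Cramér condition with parameter (b,c,R) for a single distribution. -/
def weakCramerMeas (μ : Measure (Ed d)) (b c R : ℝ) : Prop :=
  ∀ t : Ed d, R < ‖t‖ → ‖charFn μ t‖ ≤ 1 - c / ‖t‖ ^ b

/-- The empirical (resampling) measure `(1/n) Σ_j δ_{x_j}`. -/
def empMeas {d n : ℕ} (x : Fin n → Ed d) : Measure (Ed d) :=
  ((n : ℝ≥0∞))⁻¹ • ∑ i : Fin n, Measure.dirac (x i)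

/-- Sample mean. -/
def sMean {d n : ℕ} (x : Fin n → Ed d) : Ed d := (n : ℝ)⁻¹ • ∑ i, x i

/-- Sample covariance matrix `V̂_n`. -/
def Vhat {d n : ℕ} (x : Fin n → Ed d) : Matrix (Fin d) (Fin d) ℝ :=
  (n : ℝ)⁻¹ • ∑ i : Fin n, Matrix.of fun k l => (x i k - sMean x k) * (x i l - sMean x l)

/-- The bootstrap distribution `Q_{n,ℱ_n}`: the conditional distribution, given the
sample x, of `√n V̂_n^{−1/2}(X̄* − X̄)` where `X̄*` is the mean of n i.i.d. draws from
the empirical measure of x. -/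
def bootQ {d n : ℕ} (x : Fin n → Ed d) : Measure (Ed d) :=
  (Measure.pi fun _ : Fin n => empMeas x).map
    fun y => Real.sqrt n • mulVecE (matInvSqrt (Vhat x)) (sMean y - sMean x)

/-- `χ*_ν`, the ν-th cumulant of the conditional distribution of a bootstrap draw
given the sample, i.e. of the empirical measure. -/
def bootChi {d n : ℕ} (x : Fin n → Ed d) (ν : Fin d → ℕ) : ℂ := cumulant (empMeas x) ν

/-- `Q̃_{n,ℱ_n}`, the Edgeworth signed measure built from the bootstrap cumulants. -/
def bootQtilde {d n : ℕ} (s : ℕ) (x : Fin n → Ed d) (A : Set (Ed d)) : ℝ :=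
  edgeworthSM (bootChi x) n s A

/-- Event `ℰ_{n,0}(ρ̄) = {(1/n) Σ ‖X_i‖^s ≤ ρ̄}`. -/
def Ev0 {d : ℕ} (n s : ℕ) (ρ : ℝ) : Set (Fin n → Ed d) :=
  {x | (n : ℝ)⁻¹ * ∑ i, ‖x i‖ ^ s ≤ ρ}

/-- Event `ℰ_{n,1}(c₁) = {smallest eigenvalue of V̂_n ≥ c₁}` (via the quadratic form). -/
def Ev1 {d : ℕ} (n : ℕ) (c₁ : ℝ) : Set (Fin n → Ed d) :=
  {x | ∀ v : Ed d, c₁ * ‖v‖ ^ 2 ≤ (inner ℝ v (mulVecE (Vhat x) v) : ℝ)}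

/-- Event `ℰ_{n,2}(c₂)`: all mixed absolute moments of the sample of order ≤ s are ≤ c₂. -/
def Ev2 {d : ℕ} (n s : ℕ) (c₂ : ℝ) : Set (Fin n → Ed d) :=
  {x | ∀ v : Fin d → ℕ, (∑ k, v k) ≤ s → (n : ℝ)⁻¹ * ∑ i, ∏ k, |x i k| ^ (v k) ≤ c₂}

/-- `ξ(u,v;t) = inf_{q∈ℤ} (t'(u−v) − 2πq)²`. -/
def xiFn {d : ℕ} (t u v : Ed d) : ℝ := ⨅ q : ℤ, ((inner ℝ t (u - v) : ℝ) - 2 * π * (q : ℝ)) ^ 2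

/-- Condition (★): `c_R ≤ sup_{‖t‖>R} (1/(2π²)) E_P[inf_q (t'(X₁−X₂) − 2πq)²]`
for X₁, X₂ i.i.d. with distribution P. -/
def condStar {d : ℕ} (P : Measure (Ed d)) (R cR : ℝ) : Prop :=
  cR ≤ ⨆ t : {t : Ed d // R < ‖t‖},
    (2 * π ^ 2)⁻¹ * ∫ p : Ed d × Ed d, xiFn t.1 p.1 p.2 ∂(P.prod P)



private lemma myCosHalfLe {y : ℝ} (h0 : 0 ≤ y) (h : y ≤ π) :
    Real.cos (y / 2) ≤ 1 - y ^ 2 / π ^ 2 := by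
  have hπ := Real.pi_pos
  have hmem0 : (0:ℝ) ∈ Set.Icc (0:ℝ) π := ⟨le_rfl, hπ.le⟩
  have hmem1 : π / 4 ∈ Set.Icc (0:ℝ) π := ⟨by positivity, by linarith⟩
  have ha : (0:ℝ) ≤ 1 - y / π := by
    rw [sub_nonneg]; exact div_le_one_of_le₀ h hπ.le
  have hb : (0:ℝ) ≤ y / π := by positivity
  have hab : (1 - y / π) + y / π = 1 := by ring
  have hconc := strictConcaveOn_sin_Icc.concaveOn.2 hmem0 hmem1 ha hb hab
  rw [smul_eq_mul, smul_eq_mul, smul_eq_mul, smul_eq_mul, Real.sin_zero,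
    Real.sin_pi_div_four, mul_zero, zero_add] at hconc
  have harg : 0 + y / π * (π / 4) = y / 4 := by field_simp; ring
  rw [harg] at hconc
  have hnn : 0 ≤ y / π * (Real.sqrt 2 / 2) := by positivity
  have hsq := pow_le_pow_left₀ hnn hconc 2
  have h2 : Real.sqrt 2 ^ 2 = 2 := Real.sq_sqrt (by norm_num)
  have hid : Real.sin (y / 4) ^ 2 = 1 / 2 - Real.cos (2 * (y / 4)) / 2 :=
    Real.sin_sq_eq_half_sub (y / 4)
  have h24 : 2 * (y / 4) = y / 2 := by ring
  rw [h24] at hid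
  have hexp : (y / π * (Real.sqrt 2 / 2)) ^ 2 = y ^ 2 / π ^ 2 * (1 / 2) := by
    rw [mul_pow, div_pow, div_pow, h2]; ring
  rw [hexp, hid] at hsq
  have hπ2 : 0 < π ^ 2 := by positivity
  nlinarith [hsq]

private lemma myXiLe (x : ℝ) :
    (⨅ q : ℤ, (x - 2 * π * (q : ℝ)) ^ 2) ≤ π ^ 2 * (1 - |Real.cos (x / 2)|) := by
  have hπ := Real.pi_pos
  set q : ℤ := round (x / (2 * π)) with hq
  have hbdd : BddBelow (Set.range fun q : ℤ => (x - 2 * π * (q : ℝ)) ^ 2) :=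
    ⟨0, by rintro _ ⟨q, rfl⟩; positivity⟩
  refine le_trans (ciInf_le hbdd q) ?_
  set y : ℝ := x - 2 * π * (q : ℝ) with hy
  have hyle : |y| ≤ π := by
    have h1 : |x / (2 * π) - q| ≤ 1 / 2 := abs_sub_round _
    have h2 : y = (x / (2 * π) - q) * (2 * π) := by field_simp [hy]; exact hy
    rw [h2, abs_mul, abs_of_pos (by positivity : (0:ℝ) < 2 * π)]
    nlinarith [h1]
  have hx2 : x / 2 = y / 2 + (q : ℝ) * π := by rw [hy]; ring
  obtain ⟨hyl, hyr⟩ := abs_le.mp hyle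
  have hcos0 : 0 ≤ Real.cos (y / 2) :=
    Real.cos_nonneg_of_neg_pi_div_two_le_of_le (by linarith) (by linarith)
  have hcabs : |Real.cos (x / 2)| = Real.cos (|y| / 2) := by
    rw [hx2, Real.cos_add_int_mul_pi, abs_mul]
    have h3 : |((-1 : ℝ)) ^ q| = 1 := by
      rcases Int.even_or_odd q with h | h
      · rw [h.neg_one_zpow]; norm_num
      · rw [h.neg_one_zpow]; norm_num
    rw [h3, one_mul, abs_of_nonneg hcos0]
    rw [show |y| / 2 = |y / 2| by rw [abs_div]; norm_num, Real.cos_abs]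
  rw [hcabs]
  have hkey := myCosHalfLe (abs_nonneg y) hyle
  have hsq : |y| ^ 2 = y ^ 2 := sq_abs y
  have hπ2 : (0:ℝ) < π ^ 2 := by positivity
  have hdiv : π ^ 2 * (|y| ^ 2 / π ^ 2) = |y| ^ 2 := by field_simp
  nlinarith [mul_le_mul_of_nonneg_left hkey hπ2.le]

private lemma myPair (α β : ℝ) :
    ‖Complex.exp ((α : ℂ) * Complex.I) + Complex.exp ((β : ℂ) * Complex.I)‖ ≤
      2 - 2 / π ^ 2 * (⨅ q : ℤ, ((α - β) - 2 * π * (q : ℝ)) ^ 2) := by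
  have hπ := Real.pi_pos
  have hπ2 : (0:ℝ) < π ^ 2 := by positivity
  have hid : Complex.exp ((α : ℂ) * Complex.I) + Complex.exp ((β : ℂ) * Complex.I) =
      Complex.exp ((((α + β) / 2 : ℝ) : ℂ) * Complex.I) *
        (2 * Complex.cos ((((α - β) / 2 : ℝ) : ℂ))) := by
    rw [Complex.two_cos, mul_add, ← Complex.exp_add, ← Complex.exp_add]
    congr 2 <;> push_cast <;> ring
  rw [hid, norm_mul, Complex.norm_exp_ofReal_mul_I, one_mul]
  rw [← Complex.ofReal_cos, show ((2:ℂ) = ((2:ℝ):ℂ)) by norm_num, ← Complex.ofReal_mul,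
    Complex.norm_real, Real.norm_eq_abs, abs_mul, abs_of_nonneg (by norm_num : (0:ℝ) ≤ 2)]
  have hxi := myXiLe (α - β)
  have : 2 / π ^ 2 * (⨅ q : ℤ, ((α - β) - 2 * π * (q : ℝ)) ^ 2) ≤
      2 * (1 - |Real.cos ((α - β) / 2)|) := by
    rw [div_mul_eq_mul_div, div_le_iff₀ hπ2]
    nlinarith [hxi]
  linarith

private lemma myOffSum {n : ℕ} (f : Fin n → ℂ) :
    (∑ p ∈ Finset.univ.filter fun p : Fin n × Fin n => p.1 ≠ p.2, (f p.1 + f p.2)) =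
      (2 * ((n : ℂ) - 1)) * ∑ i, f i := by
  rw [Finset.sum_filter, Fintype.sum_prod_type]
  have hinner : ∀ i : Fin n, (∑ j : Fin n, if i ≠ j then f i + f j else 0) =
      (n : ℂ) * f i + (∑ j, f j) - 2 * f i := by
    intro i
    have h1 : (∑ j : Fin n, if i ≠ j then f i + f j else 0) =
        ∑ j ∈ Finset.univ.filter (fun j => i ≠ j), (f i + f j) :=
      (Finset.sum_filter _ _).symm
    have h2 : Finset.univ.filter (fun j => i ≠ j) = Finset.univ.erase i := by
      ext j; simp [ne_comm, eq_comm, and_comm]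
    rw [h1, h2, Finset.sum_erase_eq_sub (Finset.mem_univ i), Finset.sum_add_distrib,
      Finset.sum_const, Finset.card_univ, Fintype.card_fin, nsmul_eq_mul]
    ring
  rw [Finset.sum_congr rfl (fun i _ => hinner i)]
  rw [Finset.sum_sub_distrib, Finset.sum_add_distrib, Finset.sum_const, Finset.card_univ,
    Fintype.card_fin, ← Finset.mul_sum, ← Finset.mul_sum, nsmul_eq_mul]
  ring

/-- **Sufficient criterion for the empirical weak Cramér condition (from the proof of
Proposition 3.1).** If `(1/(π² n(n−1))) Σ_{i≠j} ξ(u_i,u_j;t) ‖t‖^b ≥ c` for all t with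
`‖t‖ > R`, then the empirical measure `(1/n)Σ δ_{u_i}` satisfies the weak Cramér
condition with parameter (b,c,R): `|(1/n)Σ e^{i t'u_i}| ≤ 1 − c/‖t‖^b` for `‖t‖ > R`. -/
theorem empirical_weak_cramer_of_xi_bound
    (d : ℕ) (hd : 1 ≤ d) (n : ℕ) (hn : 2 ≤ n) (u : Fin n → Ed d)
    (b c R : ℝ) (hb : 0 < b) (hc : 0 < c) (hR : 0 < R)
    (hxi : ∀ t : Ed d, R < ‖t‖ →
      c ≤ (π ^ 2 * n * ((n : ℝ) - 1))⁻¹ *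
        (∑ p ∈ Finset.univ.filter fun p : Fin n × Fin n => p.1 ≠ p.2,
          xiFn t (u p.1) (u p.2)) * ‖t‖ ^ b) :
    ∀ t : Ed d, R < ‖t‖ →
      ‖(n : ℂ)⁻¹ *
          ∑ i : Fin n, Complex.exp (((inner ℝ t (u i) : ℝ) : ℂ) * Complex.I)‖ ≤
        1 - c / ‖t‖ ^ b := by
  intro t ht
  have hπ := Real.pi_pos
  have hπ2 : (0:ℝ) < π ^ 2 := by positivity
  have htpos : 0 < ‖t‖ := lt_trans hR ht
  have hTb : 0 < ‖t‖ ^ b := Real.rpow_pos_of_pos htpos b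
  have hn2 : (2:ℝ) ≤ (n:ℝ) := by exact_mod_cast hn
  have hn1 : (1:ℝ) ≤ (n:ℝ) - 1 := by linarith
  have hnpos : (0:ℝ) < (n:ℝ) := by linarith
  set Off := Finset.univ.filter (fun p : Fin n × Fin n => p.1 ≠ p.2) with hOff
  set θ : Fin n → ℝ := fun i => (inner ℝ t (u i) : ℝ) with hθ
  set X : ℝ := ∑ p ∈ Off, xiFn t (u p.1) (u p.2) with hX
  have hK : c / ‖t‖ ^ b ≤ (π ^ 2 * n * ((n:ℝ) - 1))⁻¹ * X := by
    rw [div_le_iff₀ hTb]; exact hxi t ht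
  have hxiE : ∀ p : Fin n × Fin n, xiFn t (u p.1) (u p.2) =
      ⨅ q : ℤ, ((θ p.1 - θ p.2) - 2 * π * (q:ℝ)) ^ 2 := by
    intro p
    unfold xiFn
    congr 1
    funext q
    rw [inner_sub_right]
  have hOffcard : ((Off.card : ℝ)) = (n:ℝ) * (n:ℝ) - (n:ℝ) := by
    have h1 : Off = Finset.univ.offDiag := by
      ext p; simp [hOff, Finset.mem_offDiag]
    rw [h1, Finset.offDiag_card, Finset.card_univ, Fintype.card_fin]
    have hle : n ≤ n * n := Nat.le_mul_of_pos_left n (by omega)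
    push_cast [Nat.cast_sub hle]
    ring
  set S : ℂ := ∑ i, Complex.exp (((θ i : ℝ) : ℂ) * Complex.I) with hS
  have hsum : (∑ p ∈ Off, (Complex.exp (((θ p.1 : ℝ) : ℂ) * Complex.I) +
      Complex.exp (((θ p.2 : ℝ) : ℂ) * Complex.I))) = (2 * ((n : ℂ) - 1)) * S :=
    myOffSum (fun i => Complex.exp (((θ i : ℝ) : ℂ) * Complex.I))
  have habs2 : ‖(2 * ((n : ℂ) - 1))‖ = 2 * ((n:ℝ) - 1) := by
    rw [show (2 * ((n : ℂ) - 1)) = (((2 * ((n:ℝ) - 1)) : ℝ) : ℂ) by push_cast; ring,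
      Complex.norm_real, Real.norm_eq_abs, abs_of_nonneg (by linarith)]
  have hA : 2 * ((n:ℝ) - 1) * ‖S‖ ≤
      2 * ((n:ℝ) * (n:ℝ) - (n:ℝ)) - 2 / π ^ 2 * X := by
    have h1 : 2 * ((n:ℝ) - 1) * ‖S‖ =
        ‖∑ p ∈ Off, (Complex.exp (((θ p.1 : ℝ) : ℂ) * Complex.I) +
          Complex.exp (((θ p.2 : ℝ) : ℂ) * Complex.I))‖ := by
      rw [hsum, norm_mul, habs2]
    have h2 : ∀ p ∈ Off, ‖Complex.exp (((θ p.1 : ℝ) : ℂ) * Complex.I) +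
          Complex.exp (((θ p.2 : ℝ) : ℂ) * Complex.I)‖ ≤
        2 - 2 / π ^ 2 * xiFn t (u p.1) (u p.2) := by
      intro p _
      rw [hxiE p]
      exact myPair (θ p.1) (θ p.2)
    calc 2 * ((n:ℝ) - 1) * ‖S‖
        ≤ ∑ p ∈ Off, ‖Complex.exp (((θ p.1 : ℝ) : ℂ) * Complex.I) +
            Complex.exp (((θ p.2 : ℝ) : ℂ) * Complex.I)‖ := by
          rw [h1]; exact norm_sum_le _ _
      _ ≤ ∑ p ∈ Off, (2 - 2 / π ^ 2 * xiFn t (u p.1) (u p.2)) :=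
          Finset.sum_le_sum h2
      _ = 2 * ((n:ℝ) * (n:ℝ) - (n:ℝ)) - 2 / π ^ 2 * X := by
          rw [Finset.sum_sub_distrib, Finset.sum_const, ← Finset.mul_sum, ← hX,
            nsmul_eq_mul, hOffcard]
          ring
  have hgoal : ‖(n : ℂ)⁻¹ * S‖ ≤ 1 - (π ^ 2 * n * ((n:ℝ) - 1))⁻¹ * X := by
    rw [norm_mul, norm_inv, Complex.norm_natCast]
    have hstep : ‖S‖ ≤ (n:ℝ) - X / (π ^ 2 * ((n:ℝ) - 1)) := by
      have h2 : (0:ℝ) < 2 * ((n:ℝ) - 1) := by linarith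
      rw [← mul_le_mul_iff_of_pos_right h2]
      calc ‖S‖ * (2 * ((n:ℝ) - 1)) = 2 * ((n:ℝ) - 1) * ‖S‖ := by ring
        _ ≤ 2 * ((n:ℝ) * (n:ℝ) - (n:ℝ)) - 2 / π ^ 2 * X := hA
        _ = ((n:ℝ) - X / (π ^ 2 * ((n:ℝ) - 1))) * (2 * ((n:ℝ) - 1)) := by
            field_simp
    rw [inv_mul_le_iff₀ hnpos]
    calc ‖S‖ ≤ (n:ℝ) - X / (π ^ 2 * ((n:ℝ) - 1)) := hstep
      _ = (n:ℝ) * (1 - (π ^ 2 * n * ((n:ℝ) - 1))⁻¹ * X) := by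
          field_simp
  calc ‖(n : ℂ)⁻¹ * S‖ ≤ 1 - (π ^ 2 * n * ((n:ℝ) - 1))⁻¹ * X := hgoal
    _ ≤ 1 - c / ‖t‖ ^ b := by linarith
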